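/- Given (m_1, ..., m_{2N}) in the interior of the moment space M_{2N}^{[0,1]}, there exist unique points 0 < x_1 < ... < x_N < 1 and weights w_0, w_1, ..., w_N ∈ (0,1) with w_0 + Σ_{k=1}^N w_k = 1 such that the measure ν = w_0 δ_0 + Σ_{k=1}^N w_k δ_{x_k} satisfies ∫_0^1 x^j dν(x) = m_j for j = 1, ..., 2N (lower principal representation, even case). -/

import Mathlib

open MeasureTheory

/-- The `n`-th moment space of probability measures on `[0,1]`:
`M_n = {(∫x dμ, …, ∫xⁿ dμ) : μ ∈ M₁([0,1])}`. -/
noncomputable def momentSpace (n : ℕ) : Set (Fin n → ℝ) :=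
  {m | ∃ μ : Measure ℝ, IsProbabilityMeasure μ ∧ μ (Set.Icc (0 : ℝ) 1)ᶜ = 0 ∧
    ∀ j : Fin n, m j = ∫ x, x ^ (j.1 + 1) ∂μ}

namespace LPR

open Polynomial

variable {N : ℕ} {m : Fin (2 * N) → ℝ}

/-- The linear functional attached to a moment vector. -/
noncomputable def Lf {n : ℕ} (a : Fin n → ℝ) : Polynomial ℝ →ₗ[ℝ] ℝ :=
  Polynomial.lcoeff ℝ 0 + ∑ j : Fin n, a j • Polynomial.lcoeff ℝ (j.1 + 1)

lemma Lf_apply {n : ℕ} (a : Fin n → ℝ) (p : ℝ[X]) :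
    Lf a p = p.coeff 0 + ∑ j : Fin n, a j * p.coeff (j.1 + 1) := by
  simp [Lf, LinearMap.sum_apply]

/-- Generic representation lemma: if `I` is any "moment data" with `I 0 = 1` and
`I (j+1) = a j`, then `Lf a p = ∑_{i ≤ n} coeff i * I i`. -/
lemma Lf_eq_gen {n : ℕ} (a : Fin n → ℝ) (I : ℕ → ℝ) (h0 : I 0 = 1)
    (hI : ∀ j : Fin n, I (j.1 + 1) = a j) (p : ℝ[X]) :
    Lf a p = ∑ i ∈ Finset.range (n + 1), p.coeff i * I i := by
  rw [Finset.sum_range_succ', Lf_apply, h0, mul_one, add_comm]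
  congr 1
  rw [← Fin.sum_univ_eq_sum_range (fun i => p.coeff (i + 1) * I (i + 1))]
  exact Finset.sum_congr rfl fun j _ => by rw [hI j, mul_comm]

lemma integrable_pow {μ : Measure ℝ} [IsProbabilityMeasure μ]
    (hsupp : μ (Set.Icc (0 : ℝ) 1)ᶜ = 0) (i : ℕ) :
    Integrable (fun x : ℝ => x ^ i) μ := by
  have hae : ∀ᵐ x ∂μ, x ∈ Set.Icc (0 : ℝ) 1 := by
    exact mem_ae_iff.2 hsupp
  refine (integrable_const (1 : ℝ)).mono' (continuous_pow i).aestronglyMeasurable ?_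
  filter_upwards [hae] with x hx
  rw [Real.norm_eq_abs, abs_pow]
  exact pow_le_one₀ (abs_nonneg x) (abs_le.2 ⟨le_trans (by norm_num) hx.1, hx.2⟩)

lemma integral_poly_eq {μ : Measure ℝ} [IsProbabilityMeasure μ]
    (hsupp : μ (Set.Icc (0 : ℝ) 1)ᶜ = 0) {n : ℕ} (p : ℝ[X]) (hp : p.natDegree ≤ n) :
    ∫ x, p.eval x ∂μ = ∑ i ∈ Finset.range (n + 1), p.coeff i * ∫ x, x ^ i ∂μ := by
  have h1 : (fun x => p.eval x) = fun x => ∑ i ∈ Finset.range (n + 1), p.coeff i * x ^ i :=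
    funext fun x => eval_eq_sum_range' (Nat.lt_succ_of_le hp) x
  rw [h1, integral_finset_sum _ fun i _ => (integrable_pow hsupp i).const_mul _]
  exact Finset.sum_congr rfl fun i _ => integral_const_mul _ _

lemma Lf_eq_integral {n : ℕ} {a : Fin n → ℝ} {μ : Measure ℝ} [IsProbabilityMeasure μ]
    (hsupp : μ (Set.Icc (0 : ℝ) 1)ᶜ = 0) (hmom : ∀ j : Fin n, a j = ∫ x, x ^ (j.1 + 1) ∂μ)
    (p : ℝ[X]) (hp : p.natDegree ≤ n) :
    Lf a p = ∫ x, p.eval x ∂μ := by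
  rw [integral_poly_eq hsupp p hp]
  refine Lf_eq_gen a (fun i => ∫ x, x ^ i ∂μ) ?_ (fun j => (hmom j).symm) p
  simp

/-- Key consequence of interiority: `Lf m` is strictly positive on nonzero
polynomials of degree ≤ 2N that are nonnegative on `[0,1]`. -/
lemma L_pos {N : ℕ} {m : Fin (2 * N) → ℝ} (hm : m ∈ interior (momentSpace (2 * N)))
    (p : ℝ[X]) (hdeg : p.natDegree ≤ 2 * N)
    (hnn : ∀ x ∈ Set.Icc (0 : ℝ) 1, 0 ≤ p.eval x) (hne : p ≠ 0) : 0 < Lf m p := by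
  obtain ⟨μ, hμ, hsupp, hmom⟩ := interior_subset hm
  have hae : ∀ᵐ x ∂μ, x ∈ Set.Icc (0 : ℝ) 1 := by exact mem_ae_iff.2 hsupp
  have hLnn : 0 ≤ Lf m p := by
    rw [Lf_eq_integral hsupp hmom p hdeg]
    refine integral_nonneg_of_ae ?_
    filter_upwards [hae] with x hx using hnn x hx
  rcases hLnn.lt_or_eq with h | h
  · exact h
  exfalso
  set c : Fin (2 * N) → ℝ := fun j => p.coeff (j.1 + 1) with hc
  by_cases hc0 : c = 0
  · -- p is a constant
    have hdeg0 : p.natDegree = 0 := by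
      by_contra hd
      have h1 : 1 ≤ p.natDegree := Nat.one_le_iff_ne_zero.2 hd
      have : p.coeff p.natDegree = 0 := by
        have : c ⟨p.natDegree - 1, by omega⟩ = 0 := by rw [hc0]; rfl
        simpa [hc, Nat.sub_add_cancel h1] using this
      exact (Polynomial.leadingCoeff_ne_zero.2 hne) this
    obtain ⟨c0, rfl⟩ := Polynomial.natDegree_eq_zero.1 hdeg0
    have h0 : (0:ℝ) ≤ c0 := by simpa using hnn 0 (by norm_num)
    have : Lf m (C c0) = c0 := by simp [Lf_apply]
    rw [this] at h
    exact hne (by rw [← h]; simp)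
  · -- move in direction -c to leave the moment space
    obtain ⟨ε, hε, hball⟩ := Metric.mem_nhds_iff.1 (mem_interior_iff_mem_nhds.1 hm)
    have hcn : 0 < ‖c‖ := norm_pos_iff.2 hc0
    set δ : ℝ := ε / (2 * ‖c‖) with hδ
    have hδpos : 0 < δ := div_pos hε (by positivity)
    set m' : Fin (2 * N) → ℝ := m - δ • c with hm'
    have hmem' : m' ∈ momentSpace (2 * N) := by
      apply hball
      rw [Metric.mem_ball, dist_eq_norm]
      have : m' - m = -(δ • c) := by rw [hm']; abel
      rw [this, norm_neg, norm_smul, Real.norm_eq_abs, abs_of_pos hδpos, hδ]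
      rw [div_mul_eq_mul_div, mul_comm]
      rw [mul_comm (2:ℝ) ‖c‖, ← div_div]
      have : ‖c‖ * ε / ‖c‖ = ε := by field_simp
      rw [this]
      linarith
    obtain ⟨μ', hμ', hsupp', hmom'⟩ := hmem'
    have hnn' : 0 ≤ Lf m' p := by
      rw [Lf_eq_integral hsupp' hmom' p hdeg]
      refine integral_nonneg_of_ae ?_
      have hae' : ∀ᵐ x ∂μ', x ∈ Set.Icc (0 : ℝ) 1 := by exact mem_ae_iff.2 hsupp'
      filter_upwards [hae'] with x hx using hnn x hx
    have hsum : 0 < ∑ j : Fin (2 * N), c j * c j := by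
      have hex : ∃ j, c j ≠ 0 := Function.ne_iff.1 hc0
      obtain ⟨j, hj⟩ := hex
      refine Finset.sum_pos' (fun i _ => mul_self_nonneg _) ⟨j, Finset.mem_univ j, ?_⟩
      exact mul_self_pos.2 hj
    have heq : Lf m' p = Lf m p - δ * ∑ j : Fin (2 * N), c j * c j := by
      rw [Lf_apply, Lf_apply, hm', Finset.mul_sum]
      have hterm : ∀ j : Fin (2 * N),
          (m - δ • c) j * p.coeff (j.1 + 1) = m j * p.coeff (j.1 + 1) - δ * (c j * c j) := by
        intro j; simp only [Pi.sub_apply, Pi.smul_apply, smul_eq_mul, hc]; ring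
      rw [Finset.sum_congr rfl fun j _ => hterm j, Finset.sum_sub_distrib]
      ring
    rw [heq, ← h] at hnn'
    linarith [mul_pos hδpos hsum]


/-- Expansion of `Lf` over a factor of bounded degree. -/
lemma L_mul_expand (a : Fin (2 * N) → ℝ) (g q : ℝ[X]) {n : ℕ} (hq : q.natDegree < n) :
    Lf a (g * q) = ∑ i ∈ Finset.range n, q.coeff i * Lf a (g * X ^ i) := by
  conv_lhs => rw [as_sum_range' q n hq]
  rw [Finset.mul_sum, map_sum]
  refine Finset.sum_congr rfl fun i _ => ?_
  have h1 : g * monomial i (q.coeff i) = q.coeff i • (g * X ^ i) := by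
    rw [← C_mul_X_pow_eq_monomial, smul_eq_C_mul]; ring
  rw [h1, (Lf a).map_smul, smul_eq_mul]

theorem posdef (hm : m ∈ interior (momentSpace (2 * N))) (hN : 0 < N)
    (q : ℝ[X]) (hq : q.natDegree < N) (hq0 : q ≠ 0) : 0 < Lf m (X * q * q) := by
  refine L_pos hm _ ?_ ?_ ?_
  · rw [natDegree_mul (mul_ne_zero X_ne_zero hq0) hq0, natDegree_mul X_ne_zero hq0,
      natDegree_X]
    omega
  · intro x hx
    have : (X * q * q).eval x = x * (q.eval x * q.eval x) := by simp; ring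
    rw [this]
    exact mul_nonneg hx.1 (mul_self_nonneg _)
  · exact mul_ne_zero (mul_ne_zero X_ne_zero hq0) hq0

/-- Existence and uniqueness of the monic "orthogonal" polynomial of degree `N`
for the inner product `(p, q) ↦ L (X p q)`. -/
theorem exists_orth (hm : m ∈ interior (momentSpace (2 * N))) (hN : 0 < N) :
    ∃ Q : ℝ[X], Q.Monic ∧ Q.natDegree = N ∧
      ∀ r : ℝ[X], r.natDegree < N → r ≠ 0 → Lf m (X * Q * r) = 0 := by
  classical
  set E := Polynomial.degreeLTEquiv ℝ N with hE
  set T : (Fin N → ℝ) →ₗ[ℝ] (Fin N → ℝ) :=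
    LinearMap.pi (fun i => (Lf m).comp (((LinearMap.mulLeft ℝ ((X : ℝ[X]) ^ (i.1 + 1)))).comp
      ((Polynomial.degreeLT ℝ N).subtype.comp (E.symm : (Fin N → ℝ) →ₗ[ℝ] _)))) with hT
  have hTapp : ∀ (c : Fin N → ℝ) (i : Fin N),
      T c i = Lf m (X ^ (i.1 + 1) * (E.symm c : ℝ[X])) := by
    intro c i; rfl
  have hdegsym : ∀ c : Fin N → ℝ, ((E.symm c : ℝ[X])).natDegree < N := by
    intro c
    have h1 : (E.symm c : ℝ[X]) ∈ degreeLT ℝ N := (E.symm c).2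
    rw [mem_degreeLT] at h1
    rcases eq_or_ne (E.symm c : ℝ[X]) 0 with h | h
    · rw [h]; simpa using hN
    · exact natDegree_lt_iff_degree_lt h |>.2 h1
  have hinj : Function.Injective T := by
    rw [← LinearMap.ker_eq_bot, LinearMap.ker_eq_bot']
    intro c hc
    set q : ℝ[X] := (E.symm c : ℝ[X]) with hq
    rcases eq_or_ne q 0 with h0 | h0
    · rw [hq] at h0
      rw [ZeroMemClass.coe_eq_zero, EmbeddingLike.map_eq_zero_iff] at h0
      exact h0
    · exfalso
      have hpos := posdef (m := m) hm hN q (hdegsym c) h0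
      have hzero : Lf m (X * q * q) = 0 := by
        rw [show (X : ℝ[X]) * q * q = (X * q) * q by ring,
          L_mul_expand m (X * q) q (hdegsym c)]
        refine Finset.sum_eq_zero fun i hi => ?_
        have hi' : i < N := Finset.mem_range.1 hi
        have : Lf m (X * q * X ^ i) = T c ⟨i, hi'⟩ := by
          rw [hTapp]
          congr 1
          ring
        rw [show (X : ℝ[X]) * q * X ^ i = X * q * X ^ i by ring, this, hc]
        simp
      rw [hzero] at hpos; exact lt_irrefl _ hpos
  have hsurj : Function.Surjective T := (LinearMap.injective_iff_surjective).1 hinj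
  obtain ⟨c, hc⟩ := hsurj (fun i => - Lf m (X ^ (i.1 + 1) * X ^ N))
  set q : ℝ[X] := (E.symm c : ℝ[X]) with hq
  refine ⟨X ^ N + q, ?_, ?_, ?_⟩
  · refine (monic_X_pow N).add_of_left ?_
    rw [degree_X_pow]
    rcases eq_or_ne q 0 with h | h
    · rw [h, degree_zero]; exact WithBot.bot_lt_coe _
    · exact lt_of_lt_of_le ((natDegree_lt_iff_degree_lt h).1 (hdegsym c)) le_rfl
  · have hdeg : q.degree < (X ^ N : ℝ[X]).degree := by
      rw [degree_X_pow]
      rcases eq_or_ne q 0 with h | h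
      · rw [h, degree_zero]; exact WithBot.bot_lt_coe _
      · exact (natDegree_lt_iff_degree_lt h).1 (hdegsym c)
    have hdeq : (X ^ N + q).degree = (N : WithBot ℕ) := by
      rw [degree_add_eq_left_of_degree_lt hdeg, degree_X_pow]
    exact natDegree_eq_of_degree_eq_some hdeq
  · intro r hr hr0
    rw [L_mul_expand m (X * (X ^ N + q)) r hr]
    refine Finset.sum_eq_zero fun i hi => ?_
    have hi' : i < N := Finset.mem_range.1 hi
    have hsplit : (X : ℝ[X]) * (X ^ N + q) * X ^ i
        = X ^ (i + 1) * X ^ N + X ^ (i + 1) * q := by ring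
    rw [hsplit, map_add]
    have h2 : Lf m (X ^ (i + 1) * q) = T c ⟨i, hi'⟩ := (hTapp c ⟨i, hi'⟩).symm
    rw [h2, hc]
    simp


theorem orth_unique (hm : m ∈ interior (momentSpace (2 * N))) (hN : 0 < N) (Q₁ Q₂ : ℝ[X])
    (h1 : Q₁.Monic) (hd1 : Q₁.natDegree = N)
    (h2 : Q₂.Monic) (hd2 : Q₂.natDegree = N)
    (ho1 : ∀ r : ℝ[X], r.natDegree < N → r ≠ 0 → Lf m (X * Q₁ * r) = 0)
    (ho2 : ∀ r : ℝ[X], r.natDegree < N → r ≠ 0 → Lf m (X * Q₂ * r) = 0) :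
    Q₁ = Q₂ := by
  by_contra hne
  set d : ℝ[X] := Q₁ - Q₂ with hd
  have hd0 : d ≠ 0 := sub_ne_zero.2 hne
  have hddeg : d.natDegree < N := by
    have : d.degree < Q₁.degree := by
      refine degree_sub_lt ?_ h1.ne_zero ?_
      · rw [degree_eq_natDegree h1.ne_zero, degree_eq_natDegree h2.ne_zero, hd1, hd2]
      · rw [h1.leadingCoeff, h2.leadingCoeff]
    rw [degree_eq_natDegree h1.ne_zero, hd1] at this
    exact (natDegree_lt_iff_degree_lt hd0).2 this
  have hzero : Lf m (X * d * d) = 0 := by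
    have : (X : ℝ[X]) * d * d = X * Q₁ * d - X * Q₂ * d := by rw [hd]; ring
    rw [this, map_sub, ho1 d hddeg hd0, ho2 d hddeg hd0, sub_zero]
  have := posdef (m := m) hm hN d hddeg hd0
  rw [hzero] at this; exact lt_irrefl _ this

/-- A monic orthogonal polynomial of degree `N` splits with `N` distinct roots in `(0,1)`. -/
theorem roots_lemma (hm : m ∈ interior (momentSpace (2 * N))) (hN : 0 < N) (Q : ℝ[X])
    (hQm : Q.Monic) (hQd : Q.natDegree = N)
    (horth : ∀ r : ℝ[X], r.natDegree < N → r ≠ 0 → Lf m (X * Q * r) = 0) :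
    ∃ F : Finset ℝ, F.card = N ∧ ↑F ⊆ Set.Ioo (0:ℝ) 1 ∧ Q = ∏ t ∈ F, (X - C t) := by
  classical
  have hQ0 : Q ≠ 0 := hQm.ne_zero
  set G : Finset ℝ := Q.roots.toFinset.filter (fun t => t ∈ Set.Ioo (0:ℝ) 1) with hG
  set F : Finset ℝ := G.filter (fun t => Odd (Q.rootMultiplicity t)) with hF
  have hFG : F ⊆ G := Finset.filter_subset _ _
  have hGIoo : ∀ t ∈ G, t ∈ Set.Ioo (0:ℝ) 1 := fun t ht => (Finset.mem_filter.1 ht).2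
  have hcop : (↑G : Set ℝ).Pairwise (Function.onFun IsCoprime fun t => (X - C t) ^ Q.rootMultiplicity t) :=
    fun a _ b _ hab => ((pairwise_coprime_X_sub_C (Function.injective_id)) hab).pow
  set h : ℝ[X] := ∏ t ∈ G, (X - C t) ^ Q.rootMultiplicity t with hh
  have hdvd : h ∣ Q :=
    Finset.prod_dvd_of_coprime hcop (fun t _ => Q.pow_rootMultiplicity_dvd t)
  obtain ⟨g, hg⟩ := hdvd
  have hgne : g ≠ 0 := by rintro rfl; rw [mul_zero] at hg; exact hQ0 hg
  have hhne : h ≠ 0 := by intro habs; rw [habs, zero_mul] at hg; exact hQ0 hg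
  -- g has no root in (0,1)
  have hgroot : ∀ t ∈ Set.Ioo (0:ℝ) 1, g.eval t ≠ 0 := by
    intro t ht
    by_cases hQt : Q.eval t = 0
    · have htG : t ∈ G := by
        rw [hG, Finset.mem_filter, Multiset.mem_toFinset, mem_roots hQ0]
        exact ⟨hQt, ht⟩
      have hmul := rootMultiplicity_mul (p := h) (q := g) (x := t) (by rw [← hg]; exact hQ0)
      rw [← hg] at hmul
      have hle : Q.rootMultiplicity t ≤ h.rootMultiplicity t := by
        rw [le_rootMultiplicity_iff hhne]
        exact Finset.dvd_prod_of_mem _ htG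
      have hg0 : g.rootMultiplicity t = 0 := by omega
      intro habs
      have : 0 < g.rootMultiplicity t :=
        (rootMultiplicity_pos hgne).2 habs
      omega
    · intro habs
      apply hQt
      rw [hg, eval_mul, habs, mul_zero]
  -- constant sign of g on (0,1)
  have half_mem : (1/2 : ℝ) ∈ Set.Ioo (0:ℝ) 1 := by norm_num
  obtain ⟨ε, hε1, hεg⟩ : ∃ ε : ℝ, (ε = 1 ∨ ε = -1) ∧
      ∀ x ∈ Set.Ioo (0:ℝ) 1, 0 ≤ ε * g.eval x := by
    have key : ∀ x ∈ Set.Ioo (0:ℝ) 1, ∀ y ∈ Set.Ioo (0:ℝ) 1,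
        g.eval x < 0 → 0 < g.eval y → False := by
      intro x hx y hy hgx hgy
      have hcont : ContinuousOn (fun z => g.eval z) (Set.uIcc x y) :=
        (Polynomial.continuous g).continuousOn
      have h0mem : (0:ℝ) ∈ Set.uIcc (g.eval x) (g.eval y) :=
        Set.mem_uIcc.2 (Or.inl ⟨le_of_lt hgx, le_of_lt hgy⟩)
      obtain ⟨t, htmem, hteval⟩ := intermediate_value_uIcc hcont h0mem
      have : t ∈ Set.Ioo (0:ℝ) 1 := Set.OrdConnected.uIcc_subset Set.ordConnected_Ioo hx hy htmem
      exact hgroot t this hteval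
    by_cases hs : 0 ≤ g.eval (1/2)
    · refine ⟨1, Or.inl rfl, fun x hx => ?_⟩
      rw [one_mul]
      by_contra habs
      push_neg at habs
      have hs' : 0 < g.eval (1/2) :=
        lt_of_le_of_ne hs (Ne.symm (hgroot _ half_mem))
      exact key x hx (1/2) half_mem habs hs'
    · refine ⟨-1, Or.inr rfl, fun x hx => ?_⟩
      push_neg at hs
      rcases lt_trichotomy (g.eval x) 0 with h | h | h
      · nlinarith
      · exact absurd h (hgroot x hx)
      · exact absurd (key (1/2) half_mem x hx hs h) not_false
  -- F has at least N elements
  set r : ℝ[X] := ∏ t ∈ F, (X - C t) with hr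
  have hrmonic : r.Monic := monic_prod_of_monic _ _ fun t _ => monic_X_sub_C t
  have hrdeg : r.natDegree = F.card := by
    rw [hr, natDegree_prod _ _ fun t _ => X_sub_C_ne_zero t]
    simp [natDegree_X_sub_C]
  have hcard : N ≤ F.card := by
    by_contra hlt
    push_neg at hlt
    set P : ℝ[X] := C ε * (X * Q * r) with hP
    have hXQr : (X : ℝ[X]) * Q * r ≠ 0 :=
      mul_ne_zero (mul_ne_zero X_ne_zero hQ0) hrmonic.ne_zero
    have hε0 : ε ≠ 0 := by rcases hε1 with rfl | rfl <;> norm_num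
    have hP0 : P ≠ 0 := mul_ne_zero (by simpa using hε0) hXQr
    have hPdeg : P.natDegree ≤ 2 * N := by
      rw [hP, natDegree_C_mul hε0, natDegree_mul (mul_ne_zero X_ne_zero hQ0) hrmonic.ne_zero,
        natDegree_mul X_ne_zero hQ0, natDegree_X, hQd, hrdeg]
      omega
    -- nonnegativity of P on (0,1), then on [0,1]
    have hIoo : ∀ x ∈ Set.Ioo (0:ℝ) 1, 0 ≤ P.eval x := by
      intro x hx
      have heval : P.eval x
          = x * (∏ t ∈ G, (x - t) ^ (Q.rootMultiplicity t + (if t ∈ F then 1 else 0)))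
            * (ε * g.eval x) := by
        have e1 : P.eval x = ε * (x * (Q.eval x * r.eval x)) := by
          simp only [hP, eval_mul, eval_C, eval_X]; ring
        have e2 : Q.eval x = h.eval x * g.eval x := by rw [hg, eval_mul]
        have e3 : h.eval x = ∏ t ∈ G, (x - t) ^ Q.rootMultiplicity t := by
          rw [hh, eval_prod]; simp [eval_pow]
        have e4 : r.eval x = ∏ t ∈ G, (x - t) ^ (if t ∈ F then 1 else 0) := by
          rw [hr, eval_prod]
          simp only [eval_sub, eval_X, eval_C]
          calc ∏ t ∈ F, (x - t)
              = ∏ t ∈ G.filter (· ∈ F), (x - t) := by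
                rw [Finset.filter_mem_eq_inter, Finset.inter_eq_right.2 hFG]
            _ = ∏ t ∈ G, if t ∈ F then (x - t) else 1 := Finset.prod_filter _ _
            _ = ∏ t ∈ G, (x - t) ^ (if t ∈ F then 1 else 0) :=
                Finset.prod_congr rfl (fun t ht => by split <;> simp)
        have e5 : (∏ t ∈ G, (x - t) ^ rootMultiplicity t Q)
            * (∏ t ∈ G, (x - t) ^ (if t ∈ F then 1 else 0))
            = ∏ t ∈ G, (x - t) ^ (rootMultiplicity t Q + (if t ∈ F then 1 else 0)) := by
          rw [← Finset.prod_mul_distrib]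
          exact Finset.prod_congr rfl fun t _ => (pow_add _ _ _).symm
        rw [e1, e2, e3, e4, ← e5]
        ring
      rw [heval]
      refine mul_nonneg (mul_nonneg (le_of_lt hx.1) ?_) (hεg x hx)
      refine Finset.prod_nonneg fun t ht => ?_
      refine Even.pow_nonneg ?_ _
      by_cases htF : t ∈ F
      · have hodd : Odd (Q.rootMultiplicity t) := (Finset.mem_filter.1 htF).2
        simp only [htF, if_true]
        exact hodd.add_one
      · have heven : ¬ Odd (Q.rootMultiplicity t) := by
          intro habs
          exact htF (Finset.mem_filter.2 ⟨ht, habs⟩)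
        rw [Nat.not_odd_iff_even] at heven
        simpa [htF] using heven
    have hIcc : ∀ x ∈ Set.Icc (0:ℝ) 1, 0 ≤ P.eval x := by
      have hclosed : IsClosed {x : ℝ | 0 ≤ P.eval x} :=
        isClosed_le continuous_const (Polynomial.continuous P)
      have hsub : Set.Ioo (0:ℝ) 1 ⊆ {x : ℝ | 0 ≤ P.eval x} := hIoo
      have := hclosed.closure_subset_iff.2 hsub
      rw [closure_Ioo (by norm_num : (0:ℝ) ≠ 1)] at this
      exact fun x hx => this hx
    have hpos := L_pos (m := m) hm P hPdeg hIcc hP0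
    have horthr : Lf m (X * Q * r) = 0 :=
      horth r (by omega) hrmonic.ne_zero
    have : Lf m P = 0 := by
      rw [hP, ← smul_eq_C_mul, (Lf m).map_smul, horthr, smul_zero]
    rw [this] at hpos; exact lt_irrefl _ hpos
  -- conclude
  have hcardle : F.card ≤ N := by
    calc F.card ≤ G.card := Finset.card_le_card hFG
    _ ≤ Q.roots.toFinset.card := Finset.card_le_card (Finset.filter_subset _ _)
    _ ≤ Multiset.card Q.roots := Multiset.toFinset_card_le _
    _ ≤ Q.natDegree := Q.card_roots'
    _ = N := hQd
  have hcardeq : F.card = N := le_antisymm hcardle hcard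
  refine ⟨F, hcardeq, ?_, ?_⟩
  · intro t ht
    exact hGIoo t (hFG ht)
  · have hdvd2 : (∏ t ∈ F, (X - C t)) ∣ Q := by
      refine Finset.prod_dvd_of_coprime
        (fun a _ b _ hab => (pairwise_coprime_X_sub_C (Function.injective_id)) hab)
        (fun t ht => ?_)
      rw [dvd_iff_isRoot]
      have := hFG ht
      rw [hG, Finset.mem_filter, Multiset.mem_toFinset, mem_roots hQ0] at this
      exact this.1
    refine (eq_of_dvd_of_natDegree_le_of_leadingCoeff hdvd2 ?_ ?_).symm
    · rw [← hr, hrdeg, hcardeq, hQd]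
    · rw [← hr, hrmonic.leadingCoeff, hQm.leadingCoeff]


lemma Lf_one {n : ℕ} (a : Fin n → ℝ) : Lf a 1 = 1 := by
  simp [Lf_apply, coeff_one]

lemma Lf_monomial {n : ℕ} (a : Fin n → ℝ) (j : Fin n) : Lf a (X ^ (j.1 + 1)) = a j := by
  rw [Lf_apply]
  simp only [coeff_X_pow]
  rw [if_neg (by omega)]
  rw [Finset.sum_congr rfl (fun i _ => ?_), Finset.sum_ite_eq' Finset.univ j a]
  · simp
  · have : (i.1 + 1 = j.1 + 1) ↔ i = j := by
      rw [Nat.add_right_cancel_iff, Fin.val_eq_val]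
    rw [show (if i.1 + 1 = j.1 + 1 then (1:ℝ) else 0) = if i = j then 1 else 0 by
      simp [Fin.val_eq_val]]
    rw [mul_ite, mul_one, mul_zero]

/-- Generic: a convex combination of point evaluations with the right moments
agrees with `Lf`. -/
lemma Lf_eq_sum_eval {n ℓ : ℕ} (a : Fin n → ℝ) (w v : Fin ℓ → ℝ)
    (hsum : ∑ k, w k = 1) (hmom : ∀ j : Fin n, ∑ k, w k * v k ^ (j.1 + 1) = a j)
    (f : ℝ[X]) (hf : f.natDegree ≤ n) :
    Lf a f = ∑ k, w k * f.eval (v k) := by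
  rw [Lf_eq_gen a (fun i => ∑ k, w k * v k ^ i) (by simpa using hsum) hmom f]
  have heval : ∀ k, f.eval (v k) = ∑ i ∈ Finset.range (n + 1), f.coeff i * v k ^ i :=
    fun k => eval_eq_sum_range' (Nat.lt_succ_of_le hf) _
  simp_rw [heval, Finset.mul_sum]
  rw [Finset.sum_comm]
  refine Finset.sum_congr rfl fun i _ => ?_
  exact Finset.sum_congr rfl fun k _ => by ring

/-- Integral against a finite combination of Dirac measures. -/
lemma integral_comb {n : ℕ} (w v : Fin n → ℝ) (hw : ∀ k, 0 ≤ w k) (f : ℝ → ℝ) :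
    ∫ x, f x ∂(∑ k, ENNReal.ofReal (w k) • Measure.dirac (v k)) = ∑ k, w k * f (v k) := by
  have hint : ∀ (k : Fin n), Integrable f (ENNReal.ofReal (w k) • Measure.dirac (v k)) := by
    intro k
    refine Integrable.smul_measure ?_ ENNReal.ofReal_ne_top
    exact (integrable_const (f (v k))).congr (ae_eq_dirac f).symm
  rw [integral_finset_sum_measure fun k _ => hint k]
  refine Finset.sum_congr rfl fun k _ => ?_
  rw [integral_smul_measure, integral_dirac, ENNReal.toReal_ofReal (hw k), smul_eq_mul]

/-- The Gauss–Radau quadrature identity. -/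
theorem quadrature (hm : m ∈ interior (momentSpace (2 * N))) (hN : 0 < N) (F : Finset ℝ) (hFcard : F.card = N)
    (h0F : (0:ℝ) ∉ F)
    (horth : ∀ r : ℝ[X], r.natDegree < N → r ≠ 0 →
      Lf m (X * (∏ t ∈ F, (X - C t)) * r) = 0)
    (f : ℝ[X]) (hf : f.natDegree ≤ 2 * N) :
    Lf m f = ∑ t ∈ insert (0:ℝ) F, f.eval t * Lf m (Lagrange.basis (insert (0:ℝ) F) id t) := by
  classical
  set s : Finset ℝ := insert (0:ℝ) F with hs
  have hscard : s.card = N + 1 := by rw [hs, Finset.card_insert_of_notMem h0F, hFcard]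
  have hinj : Set.InjOn (id : ℝ → ℝ) ↑s := Function.injective_id.injOn
  set Q : ℝ[X] := ∏ t ∈ F, (X - C t) with hQ
  have hnodal : ∏ t ∈ s, (X - C t) = X * Q := by
    rw [hs, Finset.prod_insert h0F, map_zero, sub_zero]
  have hsne : (∏ t ∈ s, (X - C t)) ≠ 0 :=
    (monic_prod_of_monic _ _ fun t _ => monic_X_sub_C t).ne_zero
  have hsdeg : (∏ t ∈ s, (X - C t)).natDegree = N + 1 := by
    rw [natDegree_prod _ _ fun t _ => X_sub_C_ne_zero t]
    simp [natDegree_X_sub_C, hscard]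
  set ip : ℝ[X] := Lagrange.interpolate s id (fun t => f.eval t) with hip
  have hipdeg : ip.natDegree ≤ N := by
    refine natDegree_le_iff_degree_le.2 ?_
    refine le_trans (Lagrange.degree_interpolate_le _ hinj) ?_
    rw [hscard]
    simp
  have hroots : ∀ t ∈ s, (X - C t) ∣ (f - ip) := by
    intro t ht
    rw [dvd_iff_isRoot]
    have h2 := Lagrange.eval_interpolate_at_node (fun t => f.eval t) hinj ht
    simp only [id_eq] at h2
    show eval t (f - ip) = 0
    rw [eval_sub, hip, h2, sub_self]
  have hdvd : (∏ t ∈ s, (X - C t)) ∣ (f - ip) :=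
    Finset.prod_dvd_of_coprime
      (fun a _ b _ hab => (pairwise_coprime_X_sub_C (Function.injective_id)) hab) hroots
  obtain ⟨sQ, hsQ⟩ := hdvd
  have hrem : Lf m (X * Q * sQ) = 0 := by
    rcases eq_or_ne sQ 0 with rfl | hne
    · rw [mul_zero, map_zero]
    · refine horth sQ ?_ hne
      have hdiffne : f - ip ≠ 0 := by
        intro h0
        rw [h0] at hsQ
        exact hne (by
          rcases mul_eq_zero.1 hsQ.symm with h | h
          · exact absurd h hsne
          · exact h)
      have hdiffdeg : (f - ip).natDegree ≤ 2 * N :=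
        le_trans (natDegree_sub_le _ _) (by omega)
      rw [hsQ, natDegree_mul hsne hne] at hdiffdeg
      rw [hsdeg] at hdiffdeg
      omega
  have hL : Lf m f = Lf m ip + Lf m (X * Q * sQ) := by
    rw [← map_add]
    congr 1
    rw [← hnodal, ← hsQ]
    ring
  rw [hL, hrem, add_zero, hip, Lagrange.interpolate_apply, map_sum]
  refine Finset.sum_congr rfl fun t ht => ?_
  rw [← smul_eq_C_mul, (Lf m).map_smul, smul_eq_mul]


end LPR

open LPR Polynomial

theorem lower_principal_representation_even
    (N : ℕ) (hN : 0 < N) (m : Fin (2 * N) → ℝ)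
    (hm : m ∈ interior (momentSpace (2 * N))) :
    ∃! p : (Fin N → ℝ) × (Fin (N + 1) → ℝ),
      StrictMono p.1 ∧ (∀ k, p.1 k ∈ Set.Ioo (0 : ℝ) 1) ∧
        (∀ k, p.2 k ∈ Set.Ioo (0 : ℝ) 1) ∧ (∑ k, p.2 k = 1) ∧
        ∀ j : Fin (2 * N),
          (∫ x, x ^ (j.1 + 1)
            ∂(ENNReal.ofReal (p.2 0) • Measure.dirac (0 : ℝ)
              + ∑ k : Fin N, ENNReal.ofReal (p.2 k.succ) • Measure.dirac (p.1 k)))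
            = m j := by
  classical
  obtain ⟨Q, hQm, hQd, horthQ⟩ := exists_orth hm hN
  obtain ⟨F, hFcard, hFIoo, hQeq⟩ := roots_lemma hm hN Q hQm hQd horthQ
  have horthF : ∀ r : ℝ[X], r.natDegree < N → r ≠ 0 →
      Lf m (X * (∏ t ∈ F, (X - C t)) * r) = 0 := by
    rw [← hQeq]; exact horthQ
  have h0F : (0:ℝ) ∉ F := fun h => lt_irrefl 0 (hFIoo h).1
  set s : Finset ℝ := insert (0:ℝ) F with hs
  have hscard : s.card = N + 1 := by rw [hs, Finset.card_insert_of_notMem h0F, hFcard]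
  have hinj : Set.InjOn (id : ℝ → ℝ) ↑s := Function.injective_id.injOn
  set W : ℝ → ℝ := fun t => Lf m (Lagrange.basis s id t) with hW
  have quad : ∀ f : ℝ[X], f.natDegree ≤ 2 * N →
      Lf m f = ∑ t ∈ s, f.eval t * W t :=
    fun f hf => quadrature hm hN F hFcard h0F horthF f hf
  -- weights are in (0,1) and sum to 1
  have hbasisdeg : ∀ t ∈ s, (Lagrange.basis s id t).natDegree = N := by
    intro t ht
    rw [Lagrange.natDegree_basis hinj ht, hscard]
    omega
  have hWpos : ∀ t ∈ s, 0 < W t := by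
    intro t ht
    have hb := Lagrange.basis_ne_zero hinj ht
    have hq := quad ((Lagrange.basis s id t) ^ 2)
      (by rw [natDegree_pow, hbasisdeg t ht])
    have hcollapse : ∑ u ∈ s, ((Lagrange.basis s id t) ^ 2).eval u * W u = W t := by
      rw [Finset.sum_eq_single_of_mem t ht]
      · have h1 : (Lagrange.basis s id t).eval (id t) = 1 := Lagrange.eval_basis_self hinj ht
        simp only [id_eq] at h1
        rw [eval_pow, h1, one_pow, one_mul]
      · intro u hu hut
        have h0 : (Lagrange.basis s id t).eval (id u) = 0 :=
          Lagrange.eval_basis_of_ne (Ne.symm hut) hu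
        simp only [id_eq] at h0
        rw [eval_pow, h0]
        ring
    rw [hcollapse] at hq
    rw [← hq]
    refine L_pos hm _ (by rw [natDegree_pow, hbasisdeg t ht]) ?_ (pow_ne_zero 2 hb)
    intro x hx
    rw [eval_pow]
    exact sq_nonneg _
  have hWsum : ∑ t ∈ s, W t = 1 := by
    have hq := quad 1 (by simp)
    rw [Lf_one] at hq
    calc ∑ t ∈ s, W t = ∑ t ∈ s, eval t (1:ℝ[X]) * W t :=
          Finset.sum_congr rfl fun t _ => by simp
      _ = 1 := hq.symm
  have hWlt : ∀ t ∈ s, W t < 1 := by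
    intro t ht
    have h2 : ∑ u ∈ s, W u = W t + ∑ u ∈ s.erase t, W u := (Finset.add_sum_erase s W ht).symm
    have hpos : 0 < ∑ u ∈ s.erase t, W u := by
      refine Finset.sum_pos (fun u hu => hWpos u (Finset.mem_of_mem_erase hu)) ?_
      rw [← Finset.card_pos, Finset.card_erase_of_mem ht, hscard]
      omega
    rw [hWsum] at h2
    linarith
  -- the nodes
  set x1 : Fin N → ℝ := fun k => F.orderEmbOfFin hFcard k with hx1
  have hx1mono : StrictMono x1 := (F.orderEmbOfFin hFcard).strictMono
  have hx1mem : ∀ k, x1 k ∈ F := fun k => F.orderEmbOfFin_mem hFcard k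
  have hx1Ioo : ∀ k, x1 k ∈ Set.Ioo (0:ℝ) 1 := fun k => hFIoo (hx1mem k)
  set v : Fin (N + 1) → ℝ := Fin.cases 0 x1 with hv
  have hv0 : v 0 = 0 := rfl
  have hvsucc : ∀ k : Fin N, v k.succ = x1 k := fun k => rfl
  have hvmem : ∀ k, v k ∈ s := by
    intro k
    induction k using Fin.cases with
    | zero => rw [hv0, hs]; exact Finset.mem_insert_self _ _
    | succ k => rw [hvsucc, hs]; exact Finset.mem_insert_of_mem (hx1mem k)
  have hvinj : Function.Injective v := by
    intro a b hab
    rcases Fin.eq_zero_or_eq_succ a with rfl | ⟨a', rfl⟩ <;>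
      rcases Fin.eq_zero_or_eq_succ b with rfl | ⟨b', rfl⟩
    · rfl
    · rw [hv0, hvsucc] at hab
      exact absurd hab.symm (ne_of_gt (hx1Ioo b').1)
    · rw [hv0, hvsucc] at hab
      exact absurd hab (ne_of_gt (hx1Ioo a').1)
    · rw [hvsucc, hvsucc] at hab
      rw [hx1mono.injective hab]
  have himg : Finset.image v Finset.univ = s := by
    apply Finset.eq_of_subset_of_card_le
    · intro t ht
      obtain ⟨k, _, rfl⟩ := Finset.mem_image.1 ht
      exact hvmem k
    · rw [hscard, Finset.card_image_of_injective _ hvinj, Finset.card_univ, Fintype.card_fin]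
  have hsum_conv : ∀ φ : ℝ → ℝ, ∑ t ∈ s, φ t = ∑ k : Fin (N + 1), φ (v k) := by
    intro φ
    rw [← himg, Finset.sum_image fun a _ b _ h => hvinj h]
  set w2 : Fin (N + 1) → ℝ := fun k => W (v k) with hw2
  -- the measure computation, for arbitrary admissible data
  have hmeas : ∀ (y : Fin N → ℝ) (u : Fin (N + 1) → ℝ), (∀ k, 0 ≤ u k) →
      ∀ i : ℕ, (∫ x, x ^ i
          ∂(ENNReal.ofReal (u 0) • Measure.dirac (0 : ℝ)
            + ∑ k : Fin N, ENNReal.ofReal (u k.succ) • Measure.dirac (y k)))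
          = ∑ k : Fin (N + 1), u k * (Fin.cases 0 y : Fin (N+1) → ℝ) k ^ i := by
    intro y u hu i
    have hrw : (ENNReal.ofReal (u 0) • Measure.dirac (0 : ℝ)
        + ∑ k : Fin N, ENNReal.ofReal (u k.succ) • Measure.dirac (y k))
        = ∑ k : Fin (N + 1), ENNReal.ofReal (u k) •
            Measure.dirac ((Fin.cases 0 y : Fin (N+1) → ℝ) k) := by
      rw [Fin.sum_univ_succ]
      simp
    rw [hrw, integral_comb u (Fin.cases 0 y) hu (fun x => x ^ i)]
  -- existence
  refine ⟨⟨x1, w2⟩, ⟨hx1mono, hx1Ioo, ?_, ?_, ?_⟩, ?_⟩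
  · intro k
    exact ⟨hWpos (v k) (hvmem k), hWlt (v k) (hvmem k)⟩
  · rw [← hWsum, hsum_conv W]
  · intro j
    have hq := quad (X ^ (j.1 + 1)) (by rw [natDegree_X_pow]; omega)
    rw [Lf_monomial] at hq
    have := hmeas x1 w2 (fun k => le_of_lt (hWpos (v k) (hvmem k))) (j.1 + 1)
    rw [this, hq, hsum_conv (fun t => eval t ((X:ℝ[X]) ^ (j.1 + 1)) * W t)]
    refine Finset.sum_congr rfl fun k _ => ?_
    simp only [eval_pow, eval_X]
    exact mul_comm _ _
  -- uniqueness
  · rintro ⟨x', w'⟩ ⟨hmono', hIoo', hwIoo', hsum', hmom'⟩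
    set v' : Fin (N + 1) → ℝ := Fin.cases 0 x' with hv'
    have hmomsum : ∀ j : Fin (2 * N), ∑ k, w' k * v' k ^ (j.1 + 1) = m j := by
      intro j
      have := hmeas x' w' (fun k => le_of_lt (hwIoo' k).1) (j.1 + 1)
      rw [← this, hmom' j]
    have hLrep : ∀ f : ℝ[X], f.natDegree ≤ 2 * N →
        Lf m f = ∑ k, w' k * f.eval (v' k) :=
      fun f hf => Lf_eq_sum_eval m w' v' hsum' hmomsum f hf
    set Q' : ℝ[X] := ∏ k : Fin N, (X - C (x' k)) with hQ'
    have hQ'mon : Q'.Monic := monic_prod_of_monic _ _ fun k _ => monic_X_sub_C _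
    have hQ'd : Q'.natDegree = N := by
      rw [hQ', natDegree_prod _ _ fun k _ => X_sub_C_ne_zero _]
      simp [natDegree_X_sub_C]
    have horth' : ∀ r : ℝ[X], r.natDegree < N → r ≠ 0 → Lf m (X * Q' * r) = 0 := by
      intro r hr hr0
      have hdeg : (X * Q' * r).natDegree ≤ 2 * N := by
        rw [natDegree_mul (mul_ne_zero X_ne_zero hQ'mon.ne_zero) hr0,
          natDegree_mul X_ne_zero hQ'mon.ne_zero, natDegree_X, hQ'd]
        omega
      rw [hLrep _ hdeg]
      refine Finset.sum_eq_zero fun k _ => ?_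
      induction k using Fin.cases with
      | zero =>
        have : v' 0 = 0 := rfl
        rw [this]
        simp
      | succ k =>
        have hv'succ : v' k.succ = x' k := rfl
        rw [hv'succ, eval_mul, eval_mul]
        have : Q'.eval (x' k) = 0 := by
          rw [hQ', eval_prod]
          refine Finset.prod_eq_zero (Finset.mem_univ k) ?_
          simp
        rw [this]
        ring
    have hQQ' : Q' = Q := orth_unique hm hN Q' Q hQ'mon hQ'd hQm hQd horth' horthQ
    -- roots sets coincide
    have hFeq : Finset.image x' Finset.univ = F := by
      have hprodeq : ∏ t ∈ Finset.image x' Finset.univ, (X - C t) = ∏ t ∈ F, (X - C t) := by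
        rw [Finset.prod_image fun a _ b _ h => hmono'.injective h, ← hQ', hQQ', hQeq]
      ext t
      have hiff : ∀ (S : Finset ℝ), (∏ u ∈ S, (X - C u)).eval t = 0 ↔ t ∈ S := by
        intro S
        rw [eval_prod, Finset.prod_eq_zero_iff]
        constructor
        · rintro ⟨u, hu, hu0⟩
          simp only [eval_sub, eval_X, eval_C, sub_eq_zero] at hu0
          rwa [hu0]
        · intro ht
          exact ⟨t, ht, by simp⟩
      rw [← hiff, ← hiff, hprodeq]
    have hx'eq : x' = x1 := by
      have := Finset.orderEmbOfFin_unique hFcard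
        (f := x') (fun k => by rw [← hFeq]; exact Finset.mem_image_of_mem _ (Finset.mem_univ k))
        hmono'
      rw [hx1]
      exact this
    have hv'eq : v' = v := by rw [hv', hx'eq, hv]
    have hw'eq : w' = w2 := by
      funext k
      have hq := hLrep (Lagrange.basis s id (v k))
        (by rw [hbasisdeg (v k) (hvmem k)]; omega)
      have hcollapse : ∑ j, w' j * (Lagrange.basis s id (v k)).eval (v' j) = w' k := by
        rw [hv'eq]
        rw [Fintype.sum_eq_single k]
        · have h1 : (Lagrange.basis s id (v k)).eval (id (v k)) = 1 :=
            Lagrange.eval_basis_self hinj (hvmem k)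
          simp only [id_eq] at h1
          rw [h1, mul_one]
        · intro j hj
          have h0 : (Lagrange.basis s id (v k)).eval (id (v j)) = 0 :=
            Lagrange.eval_basis_of_ne (fun h => hj (hvinj h.symm)) (hvmem j)
          simp only [id_eq] at h0
          rw [h0, mul_zero]
      rw [hcollapse] at hq
      rw [← hq, hw2, hW]
    exact Prod.ext hx'eq hw'eq
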